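/- For all real x, y with −1 < x < 0 < y < 1, the inequality (−x)/(2 + x) + y/(2 − y) ≥ (2/√5) · (y − x)/√((y − x)² + 4(1 + x)(1 − y)) holds, with equality if and only if x = −1/3 and y = 1/3. -/

import Mathlib

set_option maxHeartbeats 800000

lemma hpos_aux (s q : ℝ) (hs0 : 0 < s) (hs2 : s < 2) (hq0 : 0 ≤ q) (hq1 : q ≤ s^2)
    (hq2 : q ≤ (2-s)^2) :
    0 < s*(160-248*s+144*s^2-23*s^3) + q*(20-60*s+19*s^2) - 5*q^2 := by
  rcases le_or_gt s 1 with h1 | h1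
  · nlinarith [mul_nonneg hq0 (sub_nonneg.2 hq1), mul_pos hs0 hs0, sq_nonneg (s-1),
      mul_nonneg (mul_nonneg hs0.le hs0.le) (sub_nonneg.2 h1),
      mul_nonneg (sub_nonneg.2 hq1) (sub_nonneg.2 h1), sq_nonneg q]
  · nlinarith [mul_nonneg hq0 (sub_nonneg.2 hq2), mul_pos hs0 hs0, sq_nonneg (s-1),
      mul_nonneg (mul_nonneg hs0.le hs0.le) (by linarith : (0:ℝ) ≤ s - 1),
      mul_nonneg (sub_nonneg.2 hq2) (by linarith : (0:ℝ) ≤ s-1), sq_nonneg q,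
      mul_pos (by linarith : (0:ℝ) < 2-s) hs0]

theorem xy_ineq (x y : ℝ) (hx1 : -1 < x) (hx0 : x < 0) (hy0 : 0 < y) (hy1 : y < 1) :
    (-x)/(2 + x) + y/(2 - y) ≥
      (2/Real.sqrt 5) * ((y - x)/Real.sqrt ((y - x)^2 + 4*(1 + x)*(1 - y))) ∧
    ((-x)/(2 + x) + y/(2 - y) =
      (2/Real.sqrt 5) * ((y - x)/Real.sqrt ((y - x)^2 + 4*(1 + x)*(1 - y)))
      ↔ x = -1/3 ∧ y = 1/3) := by
  have hx2 : (0:ℝ) < 2 + x := by linarith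
  have hy2 : (0:ℝ) < 2 - y := by linarith
  have ht : (0:ℝ) < y - x := by linarith
  have ht2 : y - x < 2 := by linarith
  have hprod : (0:ℝ) < 4*(1+x)*(1-y) := by nlinarith
  have hA : (0:ℝ) < (y - x)^2 + 4*(1 + x)*(1 - y) := by nlinarith [sq_nonneg (y-x)]
  have h5 : (0:ℝ) < Real.sqrt 5 := Real.sqrt_pos.2 (by norm_num)
  have h5sq : (Real.sqrt 5)^2 = 5 := Real.sq_sqrt (by norm_num)
  set rA := Real.sqrt ((y - x)^2 + 4*(1 + x)*(1 - y)) with hrA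
  have hrApos : 0 < rA := Real.sqrt_pos.2 hA
  have hrAsq : rA^2 = (y - x)^2 + 4*(1 + x)*(1 - y) := Real.sq_sqrt hA.le
  have hq1 : (x+y)^2 ≤ (y-x)^2 := by nlinarith [mul_pos (neg_pos.2 hx0) hy0]
  have hq2 : (x+y)^2 ≤ (2-(y-x))^2 := by nlinarith
  have hH : 0 < (y-x)*(160-248*(y-x)+144*(y-x)^2-23*(y-x)^3)
      + (x+y)^2*(20-60*(y-x)+19*(y-x)^2) - 5*((x+y)^2)^2 :=
    hpos_aux (y-x) ((x+y)^2) ht ht2 (sq_nonneg _) hq1 hq2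
  have hu : (0:ℝ) < y - x + x*y := by nlinarith
  have hLeq : (-x)/(2 + x) + y/(2 - y) = 2*(y - x + x*y)/((2 + x)*(2 - y)) := by
    field_simp
    ring
  have key : (y-x)^2*((2+x)*(2-y))^2 ≤ 5*(y - x + x*y)^2*((y - x)^2 + 4*(1 + x)*(1 - y)) := by
    nlinarith [sq_nonneg ((y-x)*(3*(y-x)-2)*((y-x)-4)), mul_nonneg (sq_nonneg (x+y)) hH.le]
  constructor
  · rw [hLeq, ge_iff_le]
    have hsq : (2*(y-x)*((2+x)*(2-y)))^2 ≤ (2*(y - x + x*y)*(Real.sqrt 5*rA))^2 := by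
      have e : (2*(y - x + x*y)*(Real.sqrt 5*rA))^2
          = 4*(y - x + x*y)^2*((Real.sqrt 5)^2*rA^2) := by ring
      rw [e, h5sq, hrAsq]
      nlinarith [key]
    have hle : 2*(y-x)*((2+x)*(2-y)) ≤ 2*(y - x + x*y)*(Real.sqrt 5*rA) :=
      le_of_pow_le_pow_left₀ two_ne_zero (by positivity) hsq
    have hrw : 2/Real.sqrt 5 * ((y - x)/rA) = 2*(y-x)/(Real.sqrt 5*rA) := by ring
    rw [hrw, div_le_div_iff₀ (by positivity) (by positivity)]
    linarith [hle]
  constructor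
  · intro heq
    rw [hLeq] at heq
    have heq' : 2*(y - x + x*y)/((2 + x)*(2 - y)) = 2*(y-x)/(Real.sqrt 5*rA) :=
      heq.trans (by ring)
    have e1 : 2*(y - x + x*y)*(Real.sqrt 5*rA) = 2*(y-x)*((2+x)*(2-y)) :=
      (div_eq_div_iff (by positivity) (by positivity)).1 heq'
    have e2' : (2*(y - x + x*y)*(Real.sqrt 5*rA))^2 = (2*(y-x)*((2+x)*(2-y)))^2 := by
      rw [e1]
    have e3 : 4*(y - x + x*y)^2*((Real.sqrt 5)^2*rA^2) = (2*(y-x)*((2+x)*(2-y)))^2 := by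
      linear_combination e2'
    rw [h5sq, hrAsq] at e3
    have e2 : 5*(y - x + x*y)^2*((y - x)^2 + 4*(1 + x)*(1 - y))
        = (y-x)^2*((2+x)*(2-y))^2 := by linear_combination e3/4
    have hsum : ((y-x)*(3*(y-x)-2)*((y-x)-4))^2
        + (x+y)^2 * ((y-x)*(160-248*(y-x)+144*(y-x)^2-23*(y-x)^3)
            + (x+y)^2*(20-60*(y-x)+19*(y-x)^2) - 5*((x+y)^2)^2) = 0 := by
      linear_combination 16 * e2
    have hqH0 : 0 ≤ (x+y)^2 * ((y-x)*(160-248*(y-x)+144*(y-x)^2-23*(y-x)^3)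
            + (x+y)^2*(20-60*(y-x)+19*(y-x)^2) - 5*((x+y)^2)^2) :=
      mul_nonneg (sq_nonneg _) hH.le
    have hS2 : ((y-x)*(3*(y-x)-2)*((y-x)-4))^2 = 0 :=
      le_antisymm (by linarith) (sq_nonneg _)
    have hqH : (x+y)^2 * ((y-x)*(160-248*(y-x)+144*(y-x)^2-23*(y-x)^3)
            + (x+y)^2*(20-60*(y-x)+19*(y-x)^2) - 5*((x+y)^2)^2) = 0 := by linarith
    have hq0' : (x+y)^2 = 0 := by
      rcases mul_eq_zero.1 hqH with h | h
      · exact h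
      · exact absurd h (ne_of_gt hH)
    have hxy : x + y = 0 := by
      have := sq_eq_zero_iff.1 hq0'
      linarith [this]
    have hS : (y-x)*(3*(y-x)-2)*((y-x)-4) = 0 := sq_eq_zero_iff.1 hS2
    have h3 : 3*(y-x)-2 = 0 := by
      rcases mul_eq_zero.1 hS with h | h
      · rcases mul_eq_zero.1 h with h' | h'
        · linarith
        · exact h'
      · linarith
    constructor <;> linarith
  · rintro ⟨hx, hy⟩
    subst hx hy
    rw [hLeq, hrA]
    norm_num
    rw [show (20:ℝ) = 2^2*5 by norm_num,
      Real.sqrt_mul (by positivity), Real.sqrt_sq (by norm_num : (0:ℝ) ≤ 2)]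
    have hss : Real.sqrt 5 * Real.sqrt 5 = 5 := Real.mul_self_sqrt (by norm_num)
    field_simp
    linarith [hss]
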